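/- Let ÷ be an AGM contraction operator with contraction-compatible faithful assignment Ψ ↦ ≤_Ψ. Then ÷ satisfies (IC3_sa): if Ψ ÷ β ⊨ ¬α then Ψ ÷ α ÷ β ⊨ ¬α, if and only if the assignment satisfies: whenever ω₁ ⊨ ¬α, ω₂ ⊨ α, and [[Ψ]] ⊆ [[¬α]], then ω₁ <_Ψ ω₂ implies ω₁ <_{Ψ÷α} ω₂. -/
import Mathlib


inductive Form (V : Type) : Type
  | var : V → Form V
  | falsum : Form V
  | imp : Form V → Form V → Form V

namespace Form

def eval {V : Type} (w : V → Bool) : Form V → Bool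
  | var v => w v
  | falsum => false
  | imp a b => !(eval w a) || eval w b

def neg {V : Type} (a : Form V) : Form V := imp a falsum

def top {V : Type} : Form V := neg falsum

def conj {V : Type} (a b : Form V) : Form V := neg (imp a (neg b))

end Form

/-- Worlds (propositional interpretations) over the signature `V`. -/
abbrev World (V : Type) := V → Bool

/-- Models of a single formula. -/
def FMod {V : Type} (a : Form V) : Set (World V) := {w | a.eval w = true}

/-- Models of a set of formulas. -/
def SMod {V : Type} (X : Set (Form V)) : Set (World V) := {w | ∀ a ∈ X, a.eval w = true}

/-- Deductive closure (consequence operator). -/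
def Cn {V : Type} (X : Set (Form V)) : Set (Form V) := {b | ∀ w ∈ SMod X, b.eval w = true}

/-- Minimal elements of a set of worlds w.r.t. a relation. -/
def minSet {V : Type} (S : Set (World V)) (r : World V → World V → Prop) : Set (World V) :=
  {w ∈ S | ∀ w' ∈ S, r w w'}

/-- Total preorder: total (hence reflexive) and transitive. -/
def TotalPre {V : Type} (r : World V → World V → Prop) : Prop :=
  (∀ x y, r x y ∨ r y x) ∧ (∀ x y z, r x y → r y z → r x z)

/-- A belief change operator over epistemic states `E`: each state has a
deductively closed belief set, and the operator maps a state and a formula to a state. -/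
structure BCO (V E : Type) where
  Bel : E → Set (Form V)
  closed : ∀ Ψ, Cn (Bel Ψ) = Bel Ψ
  op : E → Form V → E

/-- Models of (the belief set of) an epistemic state. -/
def stMod {V E : Type} (O : BCO V E) (Ψ : E) : Set (World V) := SMod (O.Bel Ψ)

/-- Faithful assignment: each `le Ψ` is a total preorder; models of `Ψ` are mutually
equivalent and strictly below non-models. -/
def Faithful {V E : Type} (O : BCO V E) (le : E → World V → World V → Prop) : Prop :=
  (∀ Ψ, TotalPre (le Ψ)) ∧
  (∀ Ψ w₁ w₂, w₁ ∈ stMod O Ψ → w₂ ∈ stMod O Ψ → le Ψ w₁ w₂) ∧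
  (∀ Ψ w₁ w₂, w₁ ∈ stMod O Ψ → w₂ ∉ stMod O Ψ → (le Ψ w₁ w₂ ∧ ¬ le Ψ w₂ w₁))

/-- Contraction-compatibility: `[[Ψ ÷ α]] = [[Ψ]] ∪ min([[¬α]], ≤_Ψ)`. -/
def ContrCompat {V E : Type} (O : BCO V E) (le : E → World V → World V → Prop) : Prop :=
  ∀ Ψ (α : Form V), stMod O (O.op Ψ α) = stMod O Ψ ∪ minSet (FMod α.neg) (le Ψ)

/-- Revision-compatibility: `[[Ψ * α]] = min([[α]], ≤_Ψ)`. -/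
def RevCompat {V E : Type} (O : BCO V E) (le : E → World V → World V → Prop) : Prop :=
  ∀ Ψ (α : Form V), stMod O (O.op Ψ α) = minSet (FMod α) (le Ψ)

/-- The AGM contraction postulates (C1)–(C7) for epistemic states. -/
def AGMContr {V E : Type} (O : BCO V E) : Prop :=
  (∀ Ψ α, O.Bel (O.op Ψ α) ⊆ O.Bel Ψ) ∧
  (∀ Ψ α, α ∉ O.Bel Ψ → O.Bel Ψ ⊆ O.Bel (O.op Ψ α)) ∧
  (∀ Ψ (α : Form V), ¬ (∀ w, w ∈ FMod α) → α ∉ O.Bel (O.op Ψ α)) ∧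
  (∀ Ψ α, O.Bel Ψ ⊆ Cn (O.Bel (O.op Ψ α) ∪ {α})) ∧
  (∀ Ψ α β, FMod α = FMod β → O.Bel (O.op Ψ α) = O.Bel (O.op Ψ β)) ∧
  (∀ Ψ (α β : Form V), O.Bel (O.op Ψ α) ∩ O.Bel (O.op Ψ β) ⊆ O.Bel (O.op Ψ (α.conj β))) ∧
  (∀ Ψ (α β : Form V), β ∉ O.Bel (O.op Ψ (α.conj β)) → O.Bel (O.op Ψ (α.conj β)) ⊆ O.Bel (O.op Ψ β))

/-- Unbiasedness: every consistent set of formulas has an epistemic state whose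
belief set is its deductive closure. -/
def Unbiased {V E : Type} (O : BCO V E) : Prop :=
  ∀ L : Set (Form V), (SMod L).Nonempty → ∃ Ψ : E, O.Bel Ψ = Cn L

section Aux

variable {V E : Type}

lemma eval_neg' (w : World V) (a : Form V) : a.neg.eval w = ! a.eval w := by
  simp [Form.neg, Form.eval]

lemma mem_Bel_iff (O : BCO V E) (Ψ : E) (φ : Form V) :
    φ ∈ O.Bel Ψ ↔ stMod O Ψ ⊆ FMod φ := by
  constructor
  · intro h w hw; exact hw φ h
  · intro h; rw [← O.closed Ψ]; intro w hw; exact h hw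

lemma min_nonempty [Fintype V] (r : World V → World V → Prop)
    (hr : TotalPre r) (S : Set (World V)) (hS : S.Nonempty) :
    (minSet S r).Nonempty := by
  classical
  have key : ∀ (s : Finset (World V)), s.Nonempty → ∃ m ∈ s, ∀ x ∈ s, r m x := by
    intro s
    induction s using Finset.induction_on with
    | empty => intro h; simp at h
    | @insert a s ha ih =>
      intro _
      by_cases hs : s.Nonempty
      · obtain ⟨m, hm, hmin⟩ := ih hs
        rcases hr.1 a m with h | h
        · refine ⟨a, Finset.mem_insert_self _ _, ?_⟩
          intro x hx
          rcases Finset.mem_insert.mp hx with rfl | hx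
          · rcases hr.1 x x with h' | h' <;> exact h'
          · exact hr.2 _ _ _ h (hmin x hx)
        · refine ⟨m, Finset.mem_insert_of_mem hm, ?_⟩
          intro x hx
          rcases Finset.mem_insert.mp hx with rfl | hx
          · exact h
          · exact hmin x hx
      · have : s = ∅ := Finset.not_nonempty_iff_eq_empty.mp hs
        subst this
        refine ⟨a, by simp, ?_⟩
        intro x hx; simp at hx; subst hx
        rcases hr.1 x x with h | h <;> exact h
  have hfin : S.Finite := Set.toFinite S
  obtain ⟨m, hm, hmin⟩ := key hfin.toFinset (by
    rw [Set.Finite.toFinset_nonempty]; exact hS)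
  refine ⟨m, ?_, ?_⟩
  · exact (Set.Finite.mem_toFinset hfin).mp hm
  · intro x hx; exact hmin x ((Set.Finite.mem_toFinset hfin).mpr hx)

def listConj : List (Form V) → Form V
  | [] => Form.top
  | a :: l => a.conj (listConj l)

lemma eval_conj' (w : World V) (a b : Form V) :
    (a.conj b).eval w = (a.eval w && b.eval w) := by
  cases h1 : a.eval w <;> cases h2 : b.eval w <;>
    simp [Form.conj, Form.neg, Form.eval, h1, h2]

lemma eval_listConj (w : World V) (l : List (Form V)) :
    (listConj l).eval w = l.all (fun a => a.eval w) := by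
  induction l with
  | nil => simp [listConj, Form.top, Form.neg, Form.eval]
  | cons a l ih => simp [listConj, eval_conj', ih]

noncomputable def worldForm [Fintype V] (u : World V) : Form V := by
  classical
  exact listConj (Finset.univ.toList.map
    (fun v => if u v = true then Form.var v else (Form.var v).neg))

lemma eval_worldForm [Fintype V] (u w : World V) :
    (worldForm u).eval w = true ↔ w = u := by
  classical
  rw [worldForm]
  simp only [eval_listConj, List.all_eq_true, List.mem_map]
  constructor
  · intro h
    funext v
    have h2 := h _ ⟨v, by simp, rfl⟩
    rcases Bool.eq_false_or_eq_true (u v) with hu | hu <;>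
      simp [hu, Form.eval, eval_neg'] at h2 <;> simp [hu, h2]
  · intro hw; subst hw
    rintro b ⟨v, -, rfl⟩
    rcases Bool.eq_false_or_eq_true (w v) with hu | hu <;>
      simp [hu, Form.eval, eval_neg']

noncomputable def pairForm [Fintype V] (u₁ u₂ : World V) : Form V :=
  Form.imp (worldForm u₁).neg (worldForm u₂)

lemma eval_pairForm [Fintype V] (u₁ u₂ w : World V) :
    (pairForm u₁ u₂).eval w = true ↔ (w = u₁ ∨ w = u₂) := by
  have h : (pairForm u₁ u₂).eval w
      = ((worldForm u₁).eval w || (worldForm u₂).eval w) := by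
    simp [pairForm, Form.eval, Form.neg]
  rw [h, Bool.or_eq_true, eval_worldForm, eval_worldForm]

lemma FMod_negneg (γ : Form V) : FMod γ.neg.neg = FMod γ := by
  ext w
  simp [FMod, eval_neg']

lemma not_mem_both (w : World V) (α : Form V)
    (h1 : w ∈ FMod α) (h2 : w ∈ FMod α.neg) : False := by
  simp only [FMod, Set.mem_setOf_eq, eval_neg'] at h1 h2
  rw [h1] at h2; simp at h2

lemma mem_FMod_of_not_neg (w : World V) (α : Form V)
    (h : w ∉ FMod α.neg) : w ∈ FMod α := by
  simp only [FMod, Set.mem_setOf_eq, eval_neg'] at h ⊢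
  simpa using h

end Aux

/-- (IC3_sa) holds iff the assignment satisfies (IC3ʳᵉˡ_weak). -/
theorem stmt_12 {V E : Type} [Fintype V] (O : BCO V E)
    (le : E → World V → World V → Prop)
    (hA : AGMContr O) (hF : Faithful O le) (hC : ContrCompat O le) :
    (∀ (Ψ : E) (α β : Form V),
        α.neg ∈ O.Bel (O.op Ψ β) → α.neg ∈ O.Bel (O.op (O.op Ψ α) β)) ↔
    (∀ (Ψ : E) (α : Form V) (ω₁ ω₂ : World V),
        ω₁ ∈ FMod α.neg → ω₂ ∈ FMod α → stMod O Ψ ⊆ FMod α.neg →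
          (le Ψ ω₁ ω₂ ∧ ¬ le Ψ ω₂ ω₁) →
            (le (O.op Ψ α) ω₁ ω₂ ∧ ¬ le (O.op Ψ α) ω₂ ω₁)) := by
  classical
  have refl : ∀ (Ψ : E) (x : World V), le Ψ x x := by
    intro Ψ x; rcases (hF.1 Ψ).1 x x with h | h <;> exact h
  constructor
  · intro hIC Ψ α ω₁ ω₂ h1 h2 hsub hlt
    set β : Form V := (pairForm ω₁ ω₂).neg with hβ
    have hβmod : FMod β.neg = {ω₁, ω₂} := by
      rw [hβ, FMod_negneg]
      ext w
      simp [FMod, eval_pairForm, Set.mem_insert_iff]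
    have hpre : Form.neg α ∈ O.Bel (O.op Ψ β) := by
      rw [mem_Bel_iff, hC, hβmod]
      rintro w (hw | hw)
      · exact hsub hw
      · rcases hw.1 with rfl | rfl
        · exact h1
        · exact absurd (hw.2 ω₁ (Or.inl rfl)) hlt.2
    have hpost := hIC Ψ α β hpre
    rw [mem_Bel_iff, hC, hβmod] at hpost
    have hω₂ : ω₂ ∉ minSet ({ω₁, ω₂} : Set (World V)) (le (O.op Ψ α)) := by
      intro hmem
      exact not_mem_both ω₂ α h2 (hpost (Or.inr hmem))
    have hnle : ¬ le (O.op Ψ α) ω₂ ω₁ := by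
      intro hle
      apply hω₂
      refine ⟨Or.inr rfl, ?_⟩
      rintro x (rfl | rfl)
      · exact hle
      · exact refl _ x
    have hle : le (O.op Ψ α) ω₁ ω₂ := by
      rcases (hF.1 (O.op Ψ α)).1 ω₁ ω₂ with h | h
      · exact h
      · exact absurd h hnle
    exact ⟨hle, hnle⟩
  · intro hrel Ψ α β hb
    rw [mem_Bel_iff, hC] at hb ⊢
    have hsubΨ : stMod O Ψ ⊆ FMod α.neg := fun w hw => hb (Or.inl hw)
    have hminΨ : minSet (FMod β.neg) (le Ψ) ⊆ FMod α.neg :=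
      fun w hw => hb (Or.inr hw)
    rintro w (hw | hw)
    · rw [hC] at hw
      rcases hw with hw | hw
      · exact hsubΨ hw
      · exact hw.1
    · by_contra hwa
      have hwα : w ∈ FMod α := mem_FMod_of_not_neg w α hwa
      obtain ⟨m, hm⟩ := min_nonempty (le Ψ) (hF.1 Ψ) (FMod β.neg) ⟨w, hw.1⟩
      have hmα : m ∈ FMod α.neg := hminΨ hm
      have hlt : le Ψ m w ∧ ¬ le Ψ w m := by
        refine ⟨hm.2 w hw.1, ?_⟩
        intro hwm
        have hwmin : w ∈ minSet (FMod β.neg) (le Ψ) :=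
          ⟨hw.1, fun x hx => (hF.1 Ψ).2 _ _ _ hwm (hm.2 x hx)⟩
        exact not_mem_both w α hwα (hminΨ hwmin)
      have hres := hrel Ψ α m w hmα hwα hsubΨ hlt
      exact hres.2 (hw.2 m hm.1)
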